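/- For β = 0.6, γ = 2, and t = ((√(βγ)+1)/(√(βγ)−1))·(log√(γ/β))/(√(γ/β)+1) − log(1 + √(β/γ)), the function ρ(x) = (1 + βγ − βe^{−x} − γe^{x})·(log(1 + (β − e^x)/(γe^x − 1)) + t) is strictly concave on (−log γ, log β); indeed ρ''(x) < −5 on this interval. -/

import Mathlib

open Real
set_option maxHeartbeats 1600000

noncomputable def F18 (t : ℝ) : ℝ → ℝ := fun x =>
  (1 + 0.6 * 2 - 0.6 * Real.exp (-x) - 2 * Real.exp x) *
    (Real.log (1 + (0.6 - Real.exp x) / (2 * Real.exp x - 1)) + t)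

noncomputable def D18 (t : ℝ) : ℝ → ℝ := fun x =>
  (0.6 * Real.exp (-x) - 2 * Real.exp x) *
      (Real.log (1 + (0.6 - Real.exp x) / (2 * Real.exp x - 1)) + t) +
    (1 + 0.6 * 2 - 0.6 * Real.exp (-x) - 2 * Real.exp x) *
      (-(0.2 * Real.exp x) / ((2 * Real.exp x - 1) * (Real.exp x - 0.4)))

noncomputable def D18' (t : ℝ) : ℝ → ℝ := fun x =>
  (-(0.6 * Real.exp (-x)) - 2 * Real.exp x) *
      (Real.log (1 + (0.6 - Real.exp x) / (2 * Real.exp x - 1)) + t) +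
    2 * (0.6 * Real.exp (-x) - 2 * Real.exp x) *
      (-(0.2 * Real.exp x) / ((2 * Real.exp x - 1) * (Real.exp x - 0.4))) +
    (1 + 0.6 * 2 - 0.6 * Real.exp (-x) - 2 * Real.exp x) *
      (0.4 * Real.exp x * ((Real.exp x) ^ 2 - 0.2) /
        ((2 * Real.exp x - 1) ^ 2 * (Real.exp x - 0.4) ^ 2))

lemma basic_facts {x : ℝ} (h1 : 1/2 < Real.exp x) (h2 : Real.exp x < 0.6) :
    (2 * Real.exp x - 1 ≠ 0) ∧ (Real.exp x - 0.4 ≠ 0) ∧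
    (0 < 1 + (0.6 - Real.exp x) / (2 * Real.exp x - 1)) := by
  have ha : (0:ℝ) < 2 * Real.exp x - 1 := by linarith
  have hb : (0:ℝ) < Real.exp x - 0.4 := by linarith
  refine ⟨ne_of_gt ha, ne_of_gt hb, ?_⟩
  have : 1 + (0.6 - Real.exp x) / (2 * Real.exp x - 1)
      = (Real.exp x - 0.4) / (2 * Real.exp x - 1) := by
    rw [eq_div_iff (ne_of_gt ha), add_mul, div_mul_cancel₀ _ (ne_of_gt ha)]
    ring
  rw [this]
  positivity

lemma hLog (t x : ℝ) (h1 : 1/2 < Real.exp x) (h2 : Real.exp x < 0.6) :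
    HasDerivAt (fun y => Real.log (1 + (0.6 - Real.exp y) / (2 * Real.exp y - 1)) + t)
      (-(0.2 * Real.exp x) / ((2 * Real.exp x - 1) * (Real.exp x - 0.4))) x := by
  obtain ⟨ha, hb, hg⟩ := basic_facts h1 h2
  have ha' : (0:ℝ) < 2 * Real.exp x - 1 := by linarith
  have hN : HasDerivAt (fun y : ℝ => 0.6 - Real.exp y) (0 - Real.exp x) x :=
    (hasDerivAt_const x 0.6).sub (Real.hasDerivAt_exp x)
  have hM : HasDerivAt (fun y : ℝ => 2 * Real.exp y - 1) (2 * Real.exp x) x :=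
    ((Real.hasDerivAt_exp x).const_mul 2).sub_const 1
  have key := (((hN.div hM ha).const_add 1).log (ne_of_gt hg)).add_const t
  refine key.congr_deriv (Eq.symm ?_)
  simp only [Pi.div_apply]
  rw [eq_div_iff (ne_of_gt hg)]
  rw [div_mul_eq_mul_div, div_eq_div_iff (by positivity) (by positivity)]
  rw [show 1 + (0.6 - Real.exp x) / (2 * Real.exp x - 1)
      = (Real.exp x - 0.4) / (2 * Real.exp x - 1) by
    rw [eq_div_iff ha, add_mul, div_mul_cancel₀ _ ha]; ring]
  field_simp
  ring

lemma hasDeriv1 (t x : ℝ) (h1 : 1/2 < Real.exp x) (h2 : Real.exp x < 0.6) :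
    HasDerivAt (F18 t) (D18 t x) x := by
  obtain ⟨ha, hb, hg⟩ := basic_facts h1 h2
  have hexn : HasDerivAt (fun y : ℝ => Real.exp (-y)) (Real.exp (-x) * (-1)) x :=
    (hasDerivAt_neg x).exp
  have hA : HasDerivAt (fun y : ℝ => 1 + 0.6 * 2 - 0.6 * Real.exp (-y) - 2 * Real.exp y)
      (0 - 0.6 * (Real.exp (-x) * (-1)) - 2 * Real.exp x) x :=
    ((hasDerivAt_const x (1 + 0.6*2)).sub (hexn.const_mul 0.6)).sub
      ((Real.hasDerivAt_exp x).const_mul 2)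
  have key := hA.mul (hLog t x h1 h2)
  refine key.congr_deriv (Eq.symm ?_)
  unfold D18
  ring

lemma hasDeriv2 (t x : ℝ) (h1 : 1/2 < Real.exp x) (h2 : Real.exp x < 0.6) :
    HasDerivAt (D18 t) (D18' t x) x := by
  obtain ⟨ha, hb, hg⟩ := basic_facts h1 h2
  have hexn : HasDerivAt (fun y : ℝ => Real.exp (-y)) (Real.exp (-x) * (-1)) x :=
    (hasDerivAt_neg x).exp
  have hf1 : HasDerivAt (fun y : ℝ => 0.6 * Real.exp (-y) - 2 * Real.exp y)
      (0.6 * (Real.exp (-x) * (-1)) - 2 * Real.exp x) x :=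
    (hexn.const_mul 0.6).sub ((Real.hasDerivAt_exp x).const_mul 2)
  have hA : HasDerivAt (fun y : ℝ => 1 + 0.6 * 2 - 0.6 * Real.exp (-y) - 2 * Real.exp y)
      (0 - 0.6 * (Real.exp (-x) * (-1)) - 2 * Real.exp x) x :=
    ((hasDerivAt_const x (1 + 0.6*2)).sub (hexn.const_mul 0.6)).sub
      ((Real.hasDerivAt_exp x).const_mul 2)
  have hM : HasDerivAt (fun y : ℝ => 2 * Real.exp y - 1) (2 * Real.exp x) x :=
    ((Real.hasDerivAt_exp x).const_mul 2).sub_const 1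
  have hP : HasDerivAt (fun y : ℝ => Real.exp y - 0.4) (Real.exp x) x :=
    (Real.hasDerivAt_exp x).sub_const 0.4
  have hnum : HasDerivAt (fun y : ℝ => -(0.2 * Real.exp y)) (-(0.2 * Real.exp x)) x :=
    ((Real.hasDerivAt_exp x).const_mul 0.2).neg
  have hDen0 : (2 * Real.exp x - 1) * (Real.exp x - 0.4) ≠ 0 := by
    have ha' : (0:ℝ) < 2 * Real.exp x - 1 := by linarith
    have hb' : (0:ℝ) < Real.exp x - 0.4 := by linarith
    positivity
  have hQ2 := hnum.div (hM.mul hP) hDen0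
  have key := (hf1.mul (hLog t x h1 h2)).add (hA.mul hQ2)
  refine key.congr_deriv (Eq.symm ?_)
  simp only [Pi.div_apply, Pi.mul_apply]
  unfold D18'
  set L := Real.log (1 + (0.6 - Real.exp x) / (2 * Real.exp x - 1)) with hLdef
  set v := Real.exp (-x) with hvdef
  set u := Real.exp x with hudef
  field_simp
  ring

lemma bound18 (t x : ℝ) (ht : 3.45 ≤ t) (h1 : 1/2 < Real.exp x) (h2 : Real.exp x < 0.6) :
    D18' t x < -5 := by
  have ha0 : (0:ℝ) < 2 * Real.exp x - 1 := by linarith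
  have hL0 : 0 ≤ Real.log (1 + (0.6 - Real.exp x) / (2 * Real.exp x - 1)) := by
    apply Real.log_nonneg
    have : 0 ≤ (0.6 - Real.exp x) / (2 * Real.exp x - 1) :=
      div_nonneg (by linarith) (le_of_lt ha0)
    linarith
  have hv : Real.exp (-x) = (Real.exp x)⁻¹ := Real.exp_neg x
  unfold D18'
  rw [hv]
  set L := Real.log (1 + (0.6 - Real.exp x) / (2 * Real.exp x - 1)) with hLdef
  set u := Real.exp x with hu
  have hu0 : (0:ℝ) < u := Real.exp_pos x
  have ha' : (0:ℝ) < 2 * u - 1 := by linarith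
  have hb' : (0:ℝ) < u - 0.4 := by linarith
  have h50 : (0:ℝ) ≤ u - 1/2 := by linarith
  have h60 : (0:ℝ) ≤ 3/5 - u := by linarith
  have hf2 : -(0.6 * u⁻¹) - 2 * u ≤ -2 := by
    nlinarith [mul_inv_cancel₀ (ne_of_gt hu0), sq_nonneg (u - 1/2), hu0,
      inv_pos.mpr hu0]
  have hLt0 : 0 ≤ L + t := by linarith
  have hstep1 : (-(0.6 * u⁻¹) - 2 * u) * (L + t) ≤ -2 * (L + t) :=
    mul_le_mul_of_nonneg_right hf2 hLt0
  have e3 : 2 * (0.6 * u⁻¹ - 2 * u) * (-(0.2 * u) / ((2 * u - 1) * (u - 0.4))) +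
      (1 + 0.6 * 2 - 0.6 * u⁻¹ - 2 * u) *
        (0.4 * u * (u ^ 2 - 0.2) / ((2 * u - 1) ^ 2 * (u - 0.4) ^ 2)) =
      1.4 - (24/5 * u^4 - 238/25 * u^3 + 877/125 * u^2 - 284/125 * u + 34/125) /
        ((2 * u - 1) ^ 2 * (u - 0.4) ^ 2) := by
    field_simp
    ring
  have hP : 0 ≤ 24/5 * u^4 - 238/25 * u^3 + 877/125 * u^2 - 284/125 * u + 34/125 := by
    nlinarith [mul_nonneg h50 (mul_nonneg (mul_nonneg h60 h60) h60),
      mul_nonneg (mul_nonneg h50 h50) (mul_nonneg h60 h60),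
      mul_nonneg (mul_nonneg h50 h50) (mul_nonneg h50 h50)]
  have hdiv : 0 ≤ (24/5 * u^4 - 238/25 * u^3 + 877/125 * u^2 - 284/125 * u + 34/125) /
      ((2 * u - 1) ^ 2 * (u - 0.4) ^ 2) := div_nonneg hP (by positivity)
  have hRle : 2 * (0.6 * u⁻¹ - 2 * u) * (-(0.2 * u) / ((2 * u - 1) * (u - 0.4))) +
      (1 + 0.6 * 2 - 0.6 * u⁻¹ - 2 * u) *
        (0.4 * u * (u ^ 2 - 0.2) / ((2 * u - 1) ^ 2 * (u - 0.4) ^ 2)) ≤ 1.4 := by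
    rw [e3]; linarith
  linarith

lemma tbound18 : (3.45:ℝ) ≤ (Real.sqrt (0.6 * 2) + 1) / (Real.sqrt (0.6 * 2) - 1) *
    (Real.log (Real.sqrt (2 / 0.6)) / (Real.sqrt (2 / 0.6) + 1)) -
    Real.log (1 + Real.sqrt (0.6 / 2)) := by
  have h12 : Real.sqrt (0.6 * 2) ^ 2 = 0.6 * 2 := Real.sq_sqrt (by norm_num)
  have h12n : 0 ≤ Real.sqrt (0.6 * 2) := Real.sqrt_nonneg _
  have hs2 : Real.sqrt (0.6 * 2) < 1.096 := by nlinarith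
  have hs1 : 1.09 < Real.sqrt (0.6 * 2) := by nlinarith
  have hc2 : Real.sqrt (2 / 0.6) ^ 2 = 2 / 0.6 := Real.sq_sqrt (by norm_num)
  have hcn : 0 ≤ Real.sqrt (2 / 0.6) := Real.sqrt_nonneg _
  have hc1 : 1.825 < Real.sqrt (2 / 0.6) := by nlinarith
  have hcu : Real.sqrt (2 / 0.6) < 1.826 := by nlinarith
  have hr2 : Real.sqrt (Real.sqrt (2 / 0.6)) ^ 2 = Real.sqrt (2 / 0.6) :=
    Real.sq_sqrt hcn
  have hrn : 0 ≤ Real.sqrt (Real.sqrt (2 / 0.6)) := Real.sqrt_nonneg _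
  have hr1 : 1.35 < Real.sqrt (Real.sqrt (2 / 0.6)) := by nlinarith
  have hlogr : Real.log (Real.sqrt (Real.sqrt (2 / 0.6))) =
      Real.log (Real.sqrt (2 / 0.6)) / 2 := Real.log_sqrt hcn
  have hrpos : (0:ℝ) < Real.sqrt (Real.sqrt (2 / 0.6)) := by linarith
  have hlow : 1 - (Real.sqrt (Real.sqrt (2 / 0.6)))⁻¹ ≤
      Real.log (Real.sqrt (Real.sqrt (2 / 0.6))) := by
    have h := Real.log_le_sub_one_of_pos (inv_pos.mpr hrpos)
    rw [Real.log_inv] at h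
    have hinv : (Real.sqrt (Real.sqrt (2 / 0.6)))⁻¹ * Real.sqrt (Real.sqrt (2 / 0.6)) = 1 :=
      inv_mul_cancel₀ (ne_of_gt hrpos)
    linarith
  have hinvle : (Real.sqrt (Real.sqrt (2 / 0.6)))⁻¹ ≤ 1/1.35 := by
    rw [inv_le_comm₀ hrpos (by norm_num)]
    have h135 : ((1:ℝ)/1.35)⁻¹ = 27/20 := by norm_num
    rw [h135]
    linarith
  have hlc : 14/27 ≤ Real.log (Real.sqrt (2 / 0.6)) := by
    have : (1:ℝ) - 1/1.35 = 7/27 := by norm_num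
    linarith
  have hfrac1 : 21.8 ≤ (Real.sqrt (0.6 * 2) + 1) / (Real.sqrt (0.6 * 2) - 1) := by
    rw [le_div_iff₀ (by linarith)]
    nlinarith
  have hfrac2 : 0.1834 ≤ Real.log (Real.sqrt (2 / 0.6)) / (Real.sqrt (2 / 0.6) + 1) := by
    rw [le_div_iff₀ (by linarith)]
    nlinarith
  have hprod : 21.8 * 0.1834 ≤ (Real.sqrt (0.6 * 2) + 1) / (Real.sqrt (0.6 * 2) - 1) *
      (Real.log (Real.sqrt (2 / 0.6)) / (Real.sqrt (2 / 0.6) + 1)) :=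
    mul_le_mul hfrac1 hfrac2 (by norm_num) (by linarith)
  have hd2 : Real.sqrt (0.6 / 2) ^ 2 = 0.6 / 2 := Real.sq_sqrt (by norm_num)
  have hdn : 0 ≤ Real.sqrt (0.6 / 2) := Real.sqrt_nonneg _
  have hdu : Real.sqrt (0.6 / 2) ≤ 0.548 := by nlinarith
  have hlog3 : Real.log (1 + Real.sqrt (0.6 / 2)) ≤ 0.548 := by
    have h := Real.log_le_sub_one_of_pos (show (0:ℝ) < 1 + Real.sqrt (0.6 / 2) by linarith)
    linarith
  nlinarith [hprod, hlog3]

lemma mem_facts {y : ℝ} (hy : y ∈ Set.Ioo (-Real.log 2) (Real.log 0.6)) :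
    1/2 < Real.exp y ∧ Real.exp y < 0.6 := by
  obtain ⟨hy1, hy2⟩ := hy
  constructor
  · have h := Real.exp_lt_exp.mpr hy1
    rwa [Real.exp_neg, Real.exp_log (by norm_num : (0:ℝ) < 2), ← one_div] at h
  · have h := Real.exp_lt_exp.mpr hy2
    rwa [Real.exp_log (by norm_num : (0:ℝ) < 0.6)] at h

lemma main18 (t : ℝ) (ht : 3.45 ≤ t) :
    StrictConcaveOn ℝ (Set.Ioo (-Real.log 2) (Real.log 0.6)) (F18 t) ∧
    ∀ x ∈ Set.Ioo (-Real.log 2) (Real.log 0.6), deriv (deriv (F18 t)) x < -5 := by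
  have hd2 : ∀ y ∈ Set.Ioo (-Real.log 2) (Real.log 0.6),
      deriv (deriv (F18 t)) y = D18' t y := by
    intro y hy
    have h1 := (mem_facts hy).1
    have h2 := (mem_facts hy).2
    have hev : deriv (F18 t) =ᶠ[nhds y] D18 t := by
      filter_upwards [Ioo_mem_nhds hy.1 hy.2] with z hz
      exact (hasDeriv1 t z (mem_facts hz).1 (mem_facts hz).2).deriv
    rw [hev.deriv_eq]
    exact (hasDeriv2 t y h1 h2).deriv
  constructor
  · apply strictConcaveOn_of_deriv2_neg (convex_Ioo _ _)
    · intro y hy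
      exact (hasDeriv1 t y (mem_facts hy).1
        (mem_facts hy).2).differentiableAt.continuousAt.continuousWithinAt
    · intro y hy
      rw [interior_Ioo] at hy
      have : deriv^[2] (F18 t) y = deriv (deriv (F18 t)) y := by
        simp [Function.iterate_succ, Function.comp]
      rw [this, hd2 y hy]
      have := bound18 t y ht (mem_facts hy).1 (mem_facts hy).2
      linarith
  · intro y hy
    rw [hd2 y hy]
    exact bound18 t y ht (mem_facts hy).1 (mem_facts hy).2

theorem stmt_18 :
    let β : ℝ := 0.6
    let γ : ℝ := 2
    let t : ℝ := (Real.sqrt (β * γ) + 1) / (Real.sqrt (β * γ) - 1) *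
        (Real.log (Real.sqrt (γ / β)) / (Real.sqrt (γ / β) + 1)) -
      Real.log (1 + Real.sqrt (β / γ))
    let ρ : ℝ → ℝ := fun x =>
      (1 + β * γ - β * Real.exp (-x) - γ * Real.exp x) *
        (Real.log (1 + (β - Real.exp x) / (γ * Real.exp x - 1)) + t)
    StrictConcaveOn ℝ (Set.Ioo (-Real.log γ) (Real.log β)) ρ ∧
    ∀ x ∈ Set.Ioo (-Real.log γ) (Real.log β), deriv (deriv ρ) x < -5 := by
  intro β γ t ρ
  have ht : (3.45:ℝ) ≤ t := tbound18
  exact main18 t ht
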